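/- Let g be a reductive Lie algebra over an algebraically closed field k of characteristic 0, let x = s + n be the Jordan decomposition of x ∈ g with s semisimple and n nilpotent, and let p = l ⋉ u be a parabolic subalgebra with Levi factor l = Z_g(s), the centralizer of s. Let U be the unipotent radical of the corresponding parabolic subgroup. Then the adjoint orbit of x under U equals the affine subspace x + u, i.e., {Ad(u)·x : u ∈ U} = x + u. -/

import Mathlib

open LieAlgebra

namespace Stmt1Aux

variable {k : Type*} [Field k] {g : Type*} [LieRing g] [LieAlgebra k g]

/-- A descending chain of submodules of `g` attached to a Lie subalgebra `u`. -/
def chain (u : LieSubalgebra k g) : ℕ → Submodule k g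
  | 0 => u.toSubmodule
  | (j+1) => Submodule.span k {m : g | ∃ a ∈ u, ∃ b ∈ chain u j, m = ⁅a, b⁆}

lemma lie_mem_chain_succ {u : LieSubalgebra k g} {j : ℕ} {a b : g}
    (ha : a ∈ u) (hb : b ∈ chain u j) : ⁅a, b⁆ ∈ chain u (j+1) :=
  Submodule.subset_span ⟨a, ha, b, hb, rfl⟩

lemma chain_le (u : LieSubalgebra k g) : ∀ j, chain u j ≤ u.toSubmodule := by
  intro j
  induction j with
  | zero => exact le_rfl
  | succ j ih =>
    refine Submodule.span_le.mpr ?_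
    rintro m ⟨a, ha, b, hb, rfl⟩
    exact u.lie_mem ha (ih hb)

lemma chain_le_map_lcs (u : LieSubalgebra k g) : ∀ j,
    chain u j ≤ (LieModule.lowerCentralSeries k (↥u) (↥u) j : Submodule k ↥u).map (u.incl : u →ₗ⁅k⁆ g).toLinearMap := by
  intro j
  induction j with
  | zero =>
    intro m hm
    exact ⟨⟨m, hm⟩, by rw [LieModule.lowerCentralSeries_zero]; simp, rfl⟩
  | succ j ih =>
    refine Submodule.span_le.mpr ?_
    rintro m ⟨a, ha, b, hb, rfl⟩
    obtain ⟨b', hb', rfl⟩ := ih hb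
    refine ⟨⁅(⟨a, ha⟩ : u), b'⁆, ?_, ?_⟩
    · rw [LieModule.lowerCentralSeries_succ]
      exact LieSubmodule.lie_mem_lie (LieSubmodule.mem_top _) hb'
    · rfl

lemma chain_eventually_bot [Module.Finite k g] (u : LieSubalgebra k g)
    (hnil : ∀ y ∈ u, IsNilpotent (ad k g y)) : ∃ j, chain u j = ⊥ := by
  have hfd : FiniteDimensional k g := inferInstance
  have hnoeth : IsNoetherian k u := by
    have : IsNoetherian k u.toSubmodule := inferInstance
    exact this
  have hN : LieRing.IsNilpotent u := by
    rw [LieAlgebra.isNilpotent_iff_forall (R := k)]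
    intro z
    obtain ⟨m, hm⟩ := hnil (z : g) z.2
    have key : ∀ (i : ℕ) (w : u), (((ad k (↥u) z ^ i) w : u) : g) = (ad k g (z : g) ^ i) (w : g) := by
      intro i
      induction i with
      | zero => intro w; simp
      | succ i ihh =>
        intro w
        rw [pow_succ, pow_succ]
        simp only [Module.End.mul_apply]
        rw [ihh ((ad k (↥u) z) w)]
        simp only [ad_apply, LieSubalgebra.coe_bracket]
    refine ⟨m, LinearMap.ext fun w => ?_⟩
    have h2 : (((ad k (↥u) z ^ m) w : u) : g) = 0 := by
      rw [key, hm, LinearMap.zero_apply]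
    simpa using (ZeroMemClass.coe_eq_zero).mp h2
  obtain ⟨j, hj⟩ := (LieModule.isNilpotent_iff (R := k) (L := ↥u) (M := ↥u)).mp hN
  refine ⟨j, ?_⟩
  have := chain_le_map_lcs u j
  rw [hj] at this
  simpa using le_bot_iff.mp (by simpa using this)

/-- iterated bracket lemma -/
lemma pow_lie_mem {S T : Submodule k g} (hST : S ≤ T) (z : g)
    (hz : ∀ v ∈ T, ⁅z, v⁆ ∈ S) : ∀ (i : ℕ), ∀ v ∈ T, ((ad k g z) ^ (i+1)) v ∈ S := by
  intro i
  induction i with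
  | zero => intro v hv; simpa using hz v hv
  | succ i ih =>
    intro v hv
    have : (ad k g z) ^ (i+2) = (ad k g z) ^ (i+1) * (ad k g z) := by
      rw [← pow_succ]
    rw [this, Module.End.mul_apply]
    exact ih _ (hST (hz v hv))

end Stmt1Aux

open Stmt1Aux

/-- For a Jordan decomposition `x = s + n` in a reductive Lie algebra `g`
and a parabolic subalgebra `p = l ⋉ u` with Levi factor `l = Z_g(s)`, the adjoint orbit
of `x` under the unipotent radical `U` (corresponding to `u`) is `x + u`. -/
theorem stmt_1 (k : Type*) [Field k] [IsAlgClosed k] [CharZero k]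
    (g : Type*) [LieRing g] [LieAlgebra k g] [Module.Finite k g]
    -- `g` is reductive: its radical equals its center
    (hred : LieAlgebra.radical k g = LieAlgebra.center k g)
    -- Jordan decomposition `x = s + n`
    (x s n : g) (hx : x = s + n)
    (hs : (ad k g s).IsSemisimple) (hn : IsNilpotent (ad k g n)) (hsn : ⁅s, n⁆ = 0)
    -- the parabolic subalgebra `p = l ⋉ u` with Levi factor `l = Z_g(s)`
    (l u p : LieSubalgebra k g)
    (hl : (l : Set g) = {y : g | ⁅s, y⁆ = 0})
    (hsum : l.toSubmodule ⊔ u.toSubmodule = p.toSubmodule)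
    (hdisj : l.toSubmodule ⊓ u.toSubmodule = ⊥)
    (huId : ∀ a ∈ p, ∀ y ∈ u, ⁅a, y⁆ ∈ u)
    (huNil : ∀ y ∈ u, IsNilpotent (ad k g y))
    -- the group `G` acting on `g` by Lie algebra automorphisms (adjoint action)
    (G : Type*) [Group G] (Ad : G →* (g ≃ₗ[k] g))
    (hAd : ∀ γ : G, ∀ a b : g, Ad γ ⁅a, b⁆ = ⁅Ad γ a, Ad γ b⁆)
    -- `U` is the unipotent radical of `P`: its elements are exponentials of `u`
    (U : Subgroup G) (exp : g → G)
    (hexp : ∀ y ∈ u, exp y ∈ U)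
    (hUexp : ∀ γ ∈ U, ∃ y ∈ u, γ = exp y)
    (hAdexp : ∀ y ∈ u, ∀ z : g,
      Ad (exp y) z =
        ∑ i ∈ Finset.range (Module.finrank k g + 1),
          ((i.factorial : k))⁻¹ • ((ad k g y ^ i) z)) :
    {z : g | ∃ γ ∈ U, z = Ad γ x} = {z : g | ∃ y ∈ u, z = x + y} := by
  classical
  by_cases hsg : Subsingleton g
  · ext z₀
    simp only [Set.mem_setOf_eq]
    constructor
    · rintro ⟨γ, hγ, rfl⟩
      exact ⟨0, u.zero_mem, Subsingleton.elim _ _⟩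
    · rintro ⟨y, hy, rfl⟩
      exact ⟨1, U.one_mem, Subsingleton.elim _ _⟩
  have hnontriv : Nontrivial g := not_subsingleton_iff_nontrivial.mp hsg
  obtain ⟨M, hM⟩ : ∃ M, Module.finrank k g = M + 1 :=
    ⟨Module.finrank k g - 1, (Nat.succ_pred_eq_of_pos Module.finrank_pos).symm⟩
  -- basic memberships
  have hu_le_p : u.toSubmodule ≤ p.toSubmodule := by rw [← hsum]; exact le_sup_right
  have hl_le_p : l.toSubmodule ≤ p.toSubmodule := by rw [← hsum]; exact le_sup_left
  have hsl : s ∈ l := by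
    have h1 : s ∈ (l : Set g) := by rw [hl]; exact lie_self s
    exact h1
  have hnl : n ∈ l := by
    have h1 : n ∈ (l : Set g) := by rw [hl]; exact hsn
    exact h1
  have hsp : s ∈ p := hl_le_p hsl
  have hnp : n ∈ p := hl_le_p hnl
  have hxp : x ∈ p := by rw [hx]; exact add_mem hsp hnp
  -- ad-stability of u
  have hadV : ∀ y : g, y ∈ p → ∀ v ∈ u.toSubmodule, (ad k g y) v ∈ u.toSubmodule := by
    intro y hyp v hv
    simpa using huId y hyp v (by simpa using hv)
  -- injectivity of ad x on u
  have hinj : ∀ z ∈ u, ⁅x, z⁆ = 0 → z = 0 := by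
    have hsV : ∀ v ∈ u.toSubmodule, (ad k g s) v ∈ u.toSubmodule := hadV s hsp
    have hnV : ∀ v ∈ u.toSubmodule, (ad k g n) v ∈ u.toSubmodule := hadV n hnp
    have hxV : ∀ v ∈ u.toSubmodule, (ad k g x) v ∈ u.toSubmodule := hadV x hxp
    set A := (ad k g s).restrict hsV with hA
    set N' := (ad k g n).restrict hnV with hN'
    set B := (ad k g x).restrict hxV with hB
    have hadd : ad k g x = ad k g s + ad k g n := by
      ext v; simp [hx, add_lie]
    have hBsum : B = A + N' := by
      ext v
      simp [hA, hN', hB, LinearMap.restrict_coe_apply, LinearMap.add_apply, hadd]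
    have hAunit : IsUnit A := by
      rw [LinearMap.isUnit_iff_ker_eq_bot, LinearMap.ker_eq_bot']
      intro v hv0
      have h1 : ⁅s, (v : g)⁆ = 0 := by
        have h2 := congrArg (Subtype.val) hv0
        simpa [hA, LinearMap.restrict_apply] using h2
      have h3 : (v : g) ∈ l := by
        have : (v : g) ∈ (l : Set g) := by rw [hl]; exact h1
        exact this
      have h4 : (v : g) ∈ l.toSubmodule ⊓ u.toSubmodule := ⟨by simpa using h3, v.2⟩
      rw [hdisj] at h4
      exact Subtype.ext (by simpa using h4)
    have hNnil : IsNilpotent N' := by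
      obtain ⟨m, hm⟩ := hn
      refine ⟨m, ?_⟩
      rw [hN', Module.End.pow_restrict]
      ext v
      simp [LinearMap.restrict_coe_apply, hm]
    have hcomm_g : ∀ v : g, ⁅s, ⁅n, v⁆⁆ = ⁅n, ⁅s, v⁆⁆ := by
      intro v
      rw [leibniz_lie, hsn, zero_lie, zero_add]
    have hcomm : Commute N' A := by
      ext v
      simp [hA, hN', Module.End.mul_apply, LinearMap.restrict_coe_apply, hcomm_g]
    have hBunit : IsUnit B := by
      rw [hBsum]
      exact hNnil.isUnit_add_left_of_commute hAunit hcomm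
    have hBinj : Function.Injective B :=
      LinearMap.ker_eq_bot.mp ((LinearMap.isUnit_iff_ker_eq_bot B).mp hBunit)
    intro z hz hzx
    have hzu : z ∈ u.toSubmodule := by simpa using hz
    have h5 : B ⟨z, hzu⟩ = B 0 := by
      apply Subtype.ext
      simp [hB, LinearMap.restrict_apply, hzx]
    have h6 := hBinj h5
    simpa using congrArg Subtype.val h6
  -- ad x preserves the chain
  have hadchain : ∀ j, ∀ w ∈ chain u j, ⁅x, w⁆ ∈ chain u j := by
    intro j
    induction j with
    | zero =>
      intro w hw
      have h1 : w ∈ u := hw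
      show ⁅x, w⁆ ∈ u.toSubmodule
      simpa using huId x hxp w h1
    | succ j ih =>
      intro w hw
      refine Submodule.span_induction ?_ ?_ ?_ ?_ hw
      · rintro m ⟨a, ha, b, hb, rfl⟩
        rw [leibniz_lie x a b]
        exact add_mem (lie_mem_chain_succ (huId x hxp a ha) hb)
          (lie_mem_chain_succ ha (ih b hb))
      · simp
      · intro a b _ _ hia hib; rw [lie_add]; exact add_mem hia hib
      · intro c a _ hia; rw [lie_smul]; exact Submodule.smul_mem _ _ hia
  -- surjectivity of ad x on each chain module
  have hsurj : ∀ j, ∀ δ ∈ chain u j, ∃ z ∈ chain u j, ⁅x, z⁆ = δ := by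
    intro j δ hδ
    have hxC : ∀ v ∈ chain u j, (ad k g x) v ∈ chain u j := by
      intro v hv; simpa using hadchain j v hv
    set C := (ad k g x).restrict hxC with hC
    have hCunit : IsUnit C := by
      rw [LinearMap.isUnit_iff_ker_eq_bot, LinearMap.ker_eq_bot']
      intro v hv0
      have h1 : ⁅x, (v : g)⁆ = 0 := by
        have h2 := congrArg (Subtype.val) hv0
        simpa [hC, LinearMap.restrict_apply] using h2
      have h2 : (v : g) ∈ u := by
        have := chain_le u j v.2
        simpa using this
      exact Subtype.ext (by simpa using hinj _ h2 h1)
    have hCsurj : Function.Surjective C :=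
      LinearMap.surjective_of_injective
        (LinearMap.ker_eq_bot.mp ((LinearMap.isUnit_iff_ker_eq_bot C).mp hCunit))
    obtain ⟨v, hv⟩ := hCsurj ⟨δ, hδ⟩
    refine ⟨(v : g), v.2, ?_⟩
    have h3 := congrArg Subtype.val hv
    simpa [hC, LinearMap.restrict_apply] using h3
  -- forward inclusion data
  have hfwd : ∀ γ ∈ U, ∃ y' ∈ u.toSubmodule, Ad γ x = x + y' := by
    intro γ hγ
    obtain ⟨y₀, hy₀, rfl⟩ := hUexp γ hγ
    have hy₀p : y₀ ∈ p := hu_le_p (by simpa using hy₀)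
    have hx' : (ad k g y₀) x ∈ u.toSubmodule := by
      have h1 : ⁅y₀, x⁆ = -⁅x, y₀⁆ := by rw [← lie_skew]
      have h2 : ⁅x, y₀⁆ ∈ u := huId x hxp y₀ hy₀
      simp only [ad_apply, h1]
      exact neg_mem (by simpa using h2)
    have hsum0 := hAdexp y₀ hy₀ x
    rw [Finset.sum_range_succ'] at hsum0
    refine ⟨∑ i ∈ Finset.range (Module.finrank k g),
      (((i + 1).factorial : k))⁻¹ • ((ad k g y₀ ^ (i + 1)) x), ?_, ?_⟩
    · refine Submodule.sum_mem _ fun i _ => Submodule.smul_mem _ _ ?_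
      rw [pow_succ, Module.End.mul_apply]
      exact Module.End.pow_apply_mem_of_forall_mem i (hadV y₀ hy₀p) _ hx'
    · rw [hsum0]
      simp only [Nat.factorial_zero, Nat.cast_one, inv_one, pow_zero, Module.End.one_apply,
        one_smul]
      abel
  -- main induction
  have hmain : ∀ j, ∀ y ∈ u, ∃ γ ∈ U, x + y - Ad γ x ∈ chain u j := by
    intro j
    induction j with
    | zero =>
      intro y hy
      refine ⟨1, U.one_mem, ?_⟩
      rw [map_one]
      have h1 : x + y - (1 : g ≃ₗ[k] g) x = y := by
        show x + y - x = y
        abel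
      rw [h1]
      show y ∈ u.toSubmodule
      simpa using hy
    | succ j ih =>
      intro y hy
      obtain ⟨γ, hγ, hδ⟩ := ih y hy
      set w := Ad γ x with hwdef
      set δ := x + y - w with hδdef
      obtain ⟨z, hzj, hzx⟩ := hsurj j (-δ) (neg_mem hδ)
      have hzu : z ∈ u := by simpa using (chain_le u j) hzj
      have hzxeq : ⁅z, x⁆ = δ := by rw [← lie_skew, hzx, neg_neg]
      refine ⟨exp z * γ, U.mul_mem (hexp z hzu) hγ, ?_⟩
      have hyu : y ∈ u.toSubmodule := by simpa using hy
      have hδu : δ ∈ u.toSubmodule := chain_le u j hδ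
      have hbz : ∀ v ∈ u.toSubmodule, ⁅z, v⁆ ∈ chain u (j + 1) := by
        intro v hv
        have h1 : ⁅v, z⁆ ∈ chain u (j + 1) := lie_mem_chain_succ (by simpa using hv) hzj
        rw [← lie_skew]
        exact neg_mem h1
      have hww : w = x + y - δ := by rw [hδdef]; abel
      have hTweq : (ad k g z) w = δ + ⁅z, y⁆ - ⁅z, δ⁆ := by
        rw [ad_apply, hww, lie_sub, lie_add, hzxeq]
      have hTwu : (ad k g z) w ∈ u.toSubmodule := by
        rw [hTweq]
        exact sub_mem (add_mem hδu (chain_le u (j + 1) (hbz y hyu)))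
          (chain_le u (j + 1) (hbz δ hδu))
      have hexp1 : Ad (exp z * γ) x =
          (∑ i ∈ Finset.range M,
            (((i + 1 + 1).factorial : k))⁻¹ • ((ad k g z ^ (i + 1 + 1)) w)) +
            (ad k g z) w + w := by
        rw [map_mul]
        have h2 : (Ad (exp z) * Ad γ) x = Ad (exp z) (Ad γ x) := rfl
        rw [h2, ← hwdef, hAdexp z hzu w, hM, Finset.sum_range_succ', Finset.sum_range_succ']
        norm_num
      have key : x + y - Ad (exp z * γ) x =
          ⁅z, δ⁆ - ⁅z, y⁆ - ∑ i ∈ Finset.range M,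
            (((i + 1 + 1).factorial : k))⁻¹ • ((ad k g z ^ (i + 1 + 1)) w) := by
        rw [hexp1, hTweq, hδdef]
        abel
      rw [key]
      refine sub_mem (sub_mem (hbz δ hδu) (hbz y hyu)) (Submodule.sum_mem _ fun i _ => ?_)
      refine Submodule.smul_mem _ _ ?_
      rw [pow_succ, Module.End.mul_apply]
      exact pow_lie_mem (chain_le u (j + 1)) z hbz i _ hTwu
  -- conclusion
  obtain ⟨j₀, hj₀⟩ := chain_eventually_bot u huNil
  ext z₀
  simp only [Set.mem_setOf_eq]
  constructor
  · rintro ⟨γ, hγ, rfl⟩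
    obtain ⟨y', hy', heq⟩ := hfwd γ hγ
    exact ⟨y', by simpa using hy', heq⟩
  · rintro ⟨y, hy, rfl⟩
    obtain ⟨γ, hγ, hmem⟩ := hmain j₀ y hy
    rw [hj₀] at hmem
    have h7 : x + y - Ad γ x = 0 := by simpa using hmem
    exact ⟨γ, hγ, (sub_eq_zero.mp h7)⟩
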